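/- Let G*₁ be an MPDAG with a B-component B₁₁ over vertex set V₁ containing an undirected edge X−Y. Let B₂₁ be the MPDAG over V₁ representing the DAGs of [B₁₁] with X→Y, and let G*₂ be obtained from G*₁ by replacing its induced subgraph over V₁ with B₂₁. Then G*₂ is exactly the MPDAG representing the DAGs of [G*₁] satisfying X→Y. -/

import Mathlib

/-! ## Basic notions for directed graphs (DAGs) given by an edge relation `E`. -/

/-- A directed graph (edge relation `E`) is acyclic: no directed cycles. -/
def Acyclic {V : Type*} (E : V → V → Prop) : Prop := ∀ x, ¬ Relation.TransGen E x x

/-- Two nodes are adjacent if there is an edge between them in either direction. -/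
def adjD {V : Type*} (E : V → V → Prop) (a b : V) : Prop := E a b ∨ E b a

/-- `p` is a path (in the skeleton) from `X` to `Y`: consecutive nodes are adjacent and
nodes are pairwise distinct. -/
def IsPath {V : Type*} (E : V → V → Prop) (p : List V) (X Y : V) : Prop :=
  p.head? = some X ∧ p.getLast? = some Y ∧ p.Chain' (adjD E) ∧ p.Nodup

/-- A path is d-connecting (open) given `S` if every collider on it is an ancestor
of some node of `S` and no non-collider on it lies in `S`. -/
def dConnecting {V : Type*} (E : V → V → Prop) (S : Set V) (p : List V) : Prop :=
  ∀ (i : ℕ) a b c, p[i]? = some a → p[i+1]? = some b → p[i+2]? = some c →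
    ((E a b ∧ E c b) → ∃ s ∈ S, Relation.ReflTransGen E b s) ∧
    (¬ (E a b ∧ E c b) → b ∉ S)

/-- `X` and `Y` are d-separated by `S` if every path between them is blocked by `S`. -/
def dSeparated {V : Type*} (E : V → V → Prop) (S : Set V) (X Y : V) : Prop :=
  ∀ p : List V, IsPath E p X Y → ¬ dConnecting E S p

/-- A v-structure `a → b ← c` with `a`, `c` non-adjacent. -/
def vStructD {V : Type*} (E : V → V → Prop) (a b c : V) : Prop :=
  E a b ∧ E c b ∧ a ≠ c ∧ ¬ adjD E a c

/-! ## Partially directed graphs (PDAGs / MPDAGs). -/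

/-- A partially directed graph: directed edges `dir` and undirected edges `undir`. -/
structure PDAG (V : Type*) where
  dir : V → V → Prop
  undir : V → V → Prop
  undir_symm : ∀ a b, undir a b → undir b a
  dir_asymm : ∀ a b, dir a b → ¬ dir b a
  disj : ∀ a b, undir a b → ¬ dir a b

namespace PDAG

variable {V : Type*} (G : PDAG V)

/-- Adjacency in a partially directed graph. -/
def adj (a b : V) : Prop := G.dir a b ∨ G.dir b a ∨ G.undir a b

/-- A v-structure `a → b ← c` in a PDAG, with `a, c` non-adjacent. -/
def vStruct (a b c : V) : Prop := G.dir a b ∧ G.dir c b ∧ a ≠ c ∧ ¬ G.adj a c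

/-- Parents of `X`. -/
def pa (X : V) : Set V := {z | G.dir z X}

/-- Children of `X`. -/
def ch (X : V) : Set V := {z | G.dir X z}

/-- Siblings (undirected neighbours) of `X`. -/
def sib (X : V) : Set V := {z | G.undir X z}

/-- A DAG `E` is represented by the (M)PDAG `G` (i.e. `E ∈ [G]`): it is acyclic,
has the same skeleton and the same v-structures as `G`, and preserves every
directed edge of `G`. -/
def Represents (E : V → V → Prop) : Prop :=
  Acyclic E ∧ (∀ a b, adjD E a b ↔ G.adj a b) ∧
  (∀ a b, G.dir a b → E a b) ∧
  (∀ a b c, vStructD E a b c ↔ G.vStruct a b c)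

/-- `G` is an MPDAG: its represented class is non-empty, an edge is directed in
`G` iff it has that orientation in all DAGs of the class, and every undirected
edge takes both orientations across the class. -/
def IsMPDAG : Prop :=
  (∃ E, G.Represents E) ∧
  (∀ a b, G.dir a b ↔ (G.adj a b ∧ ∀ E, G.Represents E → E a b)) ∧
  (∀ a b, G.undir a b → ∃ E, G.Represents E ∧ E a b)

/-- Induced sub-PDAG on a vertex set `W`. -/
def induce (W : Set V) : PDAG V where
  dir a b := a ∈ W ∧ b ∈ W ∧ G.dir a b
  undir a b := a ∈ W ∧ b ∈ W ∧ G.undir a b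
  undir_symm a b h := ⟨h.2.1, h.1, G.undir_symm a b h.2.2⟩
  dir_asymm a b h hb := G.dir_asymm a b h.2.2 hb.2.2
  disj a b h hd := G.disj a b h.2.2 hd.2.2

end PDAG

/-- A path in a PDAG: consecutive nodes adjacent, pairwise distinct nodes. -/
def IsPDAGPath {V : Type*} (G : PDAG V) (p : List V) (X Y : V) : Prop :=
  p.head? = some X ∧ p.getLast? = some Y ∧ p.Chain' G.adj ∧ p.Nodup

/-- A path is b-possibly causal: no edge `V_j → V_i` in `G` for `i < j` along it. -/
def bPossiblyCausal {V : Type*} (G : PDAG V) (p : List V) : Prop :=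
  ∀ (i j : ℕ) a b, i < j → p[i]? = some a → p[j]? = some b → ¬ G.dir b a

/-- A path is chordless: non-consecutive nodes are non-adjacent. -/
def Chordless {V : Type*} (G : PDAG V) (p : List V) : Prop :=
  ∀ (i j : ℕ) a b, i + 1 < j → p[i]? = some a → p[j]? = some b → ¬ G.adj a b

/-- Critical set of `X` with respect to `Y` in `G`: the adjacent vertices of `X`
lying on some chordless b-possibly causal path from `X` to `Y`. -/
def criticalSet {V : Type*} (G : PDAG V) (X Y : V) : Set V :=
  {c | ∃ p : List V, IsPDAGPath G p X Y ∧ bPossiblyCausal G p ∧ Chordless G p ∧ p[1]? = some c}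

/-- A DAG extension of `G`: acyclic, same skeleton, all directed edges of `G`
kept, and no v-structures beyond those of `G`. -/
def ExtendsNoNewV {V : Type*} (G : PDAG V) (E : V → V → Prop) : Prop :=
  Acyclic E ∧ (∀ a b, adjD E a b ↔ G.adj a b) ∧
  (∀ a b, G.dir a b → E a b) ∧
  (∀ a b c, vStructD E a b c → G.vStruct a b c)

/-- An acyclic orientation of `G` extending its directed edges. -/
def ExtendsDir {V : Type*} (G : PDAG V) (E : V → V → Prop) : Prop :=
  Acyclic E ∧ (∀ a b, adjD E a b ↔ G.adj a b) ∧ (∀ a b, G.dir a b → E a b)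

/-- `W` is (the vertex set of) a B-component of `G`: an equivalence class of the
undirected-connectivity relation. -/
def IsBComponent {V : Type*} (G : PDAG V) (W : Set V) : Prop :=
  ∃ a, W = {b | Relation.ReflTransGen G.undir a b}

/-- Every non-endpoint node of `p` is of definite status in `M`: a definite
collider or a definite non-collider. -/
def DefiniteStatus {V : Type*} (M : PDAG V) (p : List V) : Prop :=
  ∀ (i : ℕ) a b c, p[i]? = some a → p[i+1]? = some b → p[i+2]? = some c →
    (M.dir a b ∧ M.dir c b) ∨ M.dir b a ∨ M.dir b c ∨
    (M.undir a b ∧ M.undir b c ∧ ¬ M.adj a c)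

section Helpers

variable {V : Type*}

lemma adj_unfold (G : PDAG V) (a b : V) :
    G.adj a b ↔ (G.dir a b ∨ G.dir b a ∨ G.undir a b) := Iff.rfl

lemma adj_symm (G : PDAG V) {a b : V} (h : G.adj a b) : G.adj b a := by
  rcases h with h | h | h
  · exact Or.inr (Or.inl h)
  · exact Or.inl h
  · exact Or.inr (Or.inr (G.undir_symm a b h))

lemma induce_dir (G : PDAG V) (W : Set V) (a b : V) :
    (G.induce W).dir a b ↔ (a ∈ W ∧ b ∈ W ∧ G.dir a b) := Iff.rfl

lemma induce_undir (G : PDAG V) (W : Set V) (a b : V) :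
    (G.induce W).undir a b ↔ (a ∈ W ∧ b ∈ W ∧ G.undir a b) := Iff.rfl

lemma induce_adj (G : PDAG V) (W : Set V) (a b : V) :
    (G.induce W).adj a b ↔ (a ∈ W ∧ b ∈ W ∧ G.adj a b) := by
  show ((a ∈ W ∧ b ∈ W ∧ G.dir a b) ∨ (b ∈ W ∧ a ∈ W ∧ G.dir b a) ∨
    (a ∈ W ∧ b ∈ W ∧ G.undir a b)) ↔ _
  unfold PDAG.adj
  tauto

lemma bcomp_mem_iff {G : PDAG V} {V1 : Set V} (h1 : IsBComponent G V1)
    {a b : V} (hu : G.undir a b) : a ∈ V1 ↔ b ∈ V1 := by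
  obtain ⟨x, rfl⟩ := h1
  constructor
  · intro h; exact Relation.ReflTransGen.tail h hu
  · intro h; exact Relation.ReflTransGen.tail h (G.undir_symm a b hu)

/-- If `a−b` is undirected in an MPDAG, a forced edge `c → b` with `a,c` non-adjacent
is impossible (it would create a v-structure in some represented DAG). -/
lemma undir_no_forced_vee {G : PDAG V} (hG : G.IsMPDAG) {a b c : V}
    (hu : G.undir a b) (hd : G.dir c b) (hne : a ≠ c) (hnadj : ¬ G.adj a c) : False := by
  obtain ⟨E2, hE2, hab⟩ := hG.2.2 a b hu
  have hv : G.vStruct a b c := (hE2.2.2.2 a b c).mp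
    ⟨hab, hE2.2.2.1 _ _ hd, hne, fun h => by
      rcases h with h | h
      · exact hnadj ((hE2.2.1 a c).mp (Or.inl h))
      · exact hnadj ((hE2.2.1 a c).mp (Or.inr h))⟩
  exact G.disj a b hu hv.1

/-- Meek rule 1 consequence: `u → v`, `v − w` forces `u, w` adjacent in an MPDAG. -/
lemma meek1 {G : PDAG V} (hG : G.IsMPDAG) {u v w : V}
    (hd : G.dir u v) (hu : G.undir v w) : G.adj u w := by
  by_contra hadj
  have hne : w ≠ u := by
    rintro rfl
    exact G.disj w v (G.undir_symm v w hu) hd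
  exact undir_no_forced_vee hG (G.undir_symm v w hu) hd hne (fun h => hadj (adj_symm G h))

/-- `u → v`, `w → u` directed and `v − w` undirected is impossible in an MPDAG. -/
lemma ddu {G : PDAG V} (hG : G.IsMPDAG) {u v w : V}
    (h1 : G.dir u v) (h2 : G.dir w u) (h3 : G.undir v w) : False := by
  obtain ⟨E2, hE2, hvw⟩ := hG.2.2 v w h3
  exact hE2.1 v (((Relation.TransGen.single hvw).tail (hE2.2.2.1 _ _ h2)).tail (hE2.2.2.1 _ _ h1))

/-- The restriction of a DAG represented by `G` to `V1` is represented by the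
induced subgraph. -/
lemma restr_represents {G : PDAG V} {E : V → V → Prop} (hE : G.Represents E) (V1 : Set V) :
    (G.induce V1).Represents (fun a b => a ∈ V1 ∧ b ∈ V1 ∧ E a b) := by
  refine ⟨?_, ?_, ?_, ?_⟩
  · intro x hx
    exact hE.1 x (Relation.TransGen.mono (r := fun a b => a ∈ V1 ∧ b ∈ V1 ∧ E a b) (p := E) (fun a b h => h.2.2) x x hx)
  · intro a b
    rw [induce_adj]
    constructor
    · rintro (⟨ha, hb, h⟩ | ⟨hb, ha, h⟩)
      · exact ⟨ha, hb, (hE.2.1 a b).mp (Or.inl h)⟩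
      · exact ⟨ha, hb, (hE.2.1 a b).mp (Or.inr h)⟩
    · rintro ⟨ha, hb, h⟩
      rcases (hE.2.1 a b).mpr h with h' | h'
      · exact Or.inl ⟨ha, hb, h'⟩
      · exact Or.inr ⟨hb, ha, h'⟩
  · rintro a b ⟨ha, hb, hd⟩
    exact ⟨ha, hb, hE.2.2.1 a b hd⟩
  · intro a b c
    constructor
    · rintro ⟨⟨ha, hb, hab⟩, ⟨hc, hb', hcb⟩, hne, hnadj⟩
      have hnadj' : ¬ adjD E a c := by
        rintro (h | h)
        · exact hnadj (Or.inl ⟨ha, hc, h⟩)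
        · exact hnadj (Or.inr ⟨hc, ha, h⟩)
      obtain ⟨h1, h2, h3, h4⟩ := (hE.2.2.2 a b c).mp ⟨hab, hcb, hne, hnadj'⟩
      exact ⟨⟨ha, hb, h1⟩, ⟨hc, hb, h2⟩, h3, fun h => h4 ((induce_adj G V1 a c).mp h).2.2⟩
    · rintro ⟨⟨ha, hb, hab⟩, ⟨hc, hb', hcb⟩, hne, hnadj⟩
      have hnadjG : ¬ G.adj a c := fun h => hnadj ((induce_adj G V1 a c).mpr ⟨ha, hc, h⟩)
      have hnadjE : ¬ adjD E a c := fun h => hnadjG ((hE.2.1 a c).mp h)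
      refine ⟨⟨ha, hb, hE.2.2.1 _ _ hab⟩, ⟨hc, hb, hE.2.2.1 _ _ hcb⟩, hne, ?_⟩
      rintro (h | h)
      · exact hnadjE (Or.inl h.2.2)
      · exact hnadjE (Or.inr h.2.2)

/-- Chain closure of periodic edge sequences into `TransGen`. -/
lemma chain_transGen (r : V → V → Prop) (c : ℕ → V)
    (h : ∀ i, r (c i) (c (i+1))) : ∀ m, 0 < m → Relation.TransGen r (c 0) (c m) := by
  intro m hm
  induction m with
  | zero => omega
  | succ k ih =>
    rcases Nat.eq_zero_or_pos k with hk | hk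
    · subst hk; exact Relation.TransGen.single (h 0)
    · exact (ih hk).tail (h k)

lemma transGen_to_fn {r : V → V → Prop} {a b : V} (h : Relation.TransGen r a b) :
    ∃ (n : ℕ) (f : ℕ → V), 0 < n ∧ f 0 = a ∧ f n = b ∧ ∀ i < n, r (f i) (f (i+1)) := by
  induction h with
  | @single b' hab =>
    refine ⟨1, fun i => if i = 0 then a else b', one_pos, by simp, by simp, ?_⟩
    intro i hi
    interval_cases i
    simpa using hab
  | @tail b' c' hab hbc ih =>
    obtain ⟨n, f, hn, h0, hnb, hf⟩ := ih
    refine ⟨n + 1, fun i => if i = n + 1 then c' else f i, by omega, ?_, by simp, ?_⟩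
    · simp only [if_neg (by omega : (0:ℕ) ≠ n + 1)]; exact h0
    · intro i hi
      rcases Nat.lt_or_ge i n with h' | h'
      · simp only [if_neg (by omega : i ≠ n + 1), if_neg (by omega : i + 1 ≠ n + 1)]
        exact hf i h'
      · have hin' : i = n := by omega
        subst hin'
        simpa [hnb] using hbc

/-- Combination of an orientation of the induced subgraph on `V1` with an
orientation elsewhere. -/
def comb (V1 : Set V) (E' E1 : V → V → Prop) : V → V → Prop :=
  fun a b => (a ∈ V1 ∧ b ∈ V1 ∧ E' a b) ∨ (¬ (a ∈ V1 ∧ b ∈ V1) ∧ E1 a b)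

/-- Key combination lemma: replacing inside a B-component the orientation of a DAG of
`[G]` by any DAG represented by the induced subgraph yields a DAG of `[G]`. -/
lemma comb_represents {G : PDAG V} (hG : G.IsMPDAG) {V1 : Set V} (h1 : IsBComponent G V1)
    {E' E1 : V → V → Prop} (hE' : (G.induce V1).Represents E') (hE1 : G.Represents E1) :
    G.Represents (comb V1 E' E1) := by
  classical
  set Ec := comb V1 E' E1 with hEc
  have hEin : ∀ a b, a ∈ V1 → b ∈ V1 → (Ec a b ↔ E' a b) := by
    intro a b ha hb
    constructor
    · rintro (⟨_, _, h⟩ | ⟨h, _⟩)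
      · exact h
      · exact absurd ⟨ha, hb⟩ h
    · intro h; exact Or.inl ⟨ha, hb, h⟩
  have hEout : ∀ a b, ¬ (a ∈ V1 ∧ b ∈ V1) → (Ec a b ↔ E1 a b) := by
    intro a b hab
    constructor
    · rintro (⟨ha, hb, _⟩ | ⟨_, h⟩)
      · exact absurd ⟨ha, hb⟩ hab
      · exact h
    · intro h; exact Or.inr ⟨hab, h⟩
  have hskel : ∀ a b, adjD Ec a b ↔ G.adj a b := by
    intro a b
    by_cases h : a ∈ V1 ∧ b ∈ V1
    · have h1' : adjD Ec a b ↔ adjD E' a b := by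
        unfold adjD; rw [hEin a b h.1 h.2, hEin b a h.2 h.1]
      rw [h1', hE'.2.1, induce_adj]
      exact ⟨fun h' => h'.2.2, fun h' => ⟨h.1, h.2, h'⟩⟩
    · have h2 : ¬ (b ∈ V1 ∧ a ∈ V1) := fun hh => h ⟨hh.2, hh.1⟩
      have h1' : adjD Ec a b ↔ adjD E1 a b := by
        unfold adjD; rw [hEout a b h, hEout b a h2]
      rw [h1', hE1.2.1]
  have hdirp : ∀ a b, G.dir a b → Ec a b := by
    intro a b hd
    by_cases h : a ∈ V1 ∧ b ∈ V1
    · exact Or.inl ⟨h.1, h.2, hE'.2.2.1 a b ⟨h.1, h.2, hd⟩⟩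
    · exact Or.inr ⟨h, hE1.2.2.1 a b hd⟩
  have hanti : ∀ a b, Ec a b → ¬ Ec b a := by
    intro a b hab hba
    by_cases h : a ∈ V1 ∧ b ∈ V1
    · exact hE'.1 a ((Relation.TransGen.single ((hEin a b h.1 h.2).mp hab)).tail
        ((hEin b a h.2 h.1).mp hba))
    · exact hE1.1 a ((Relation.TransGen.single ((hEout a b h).mp hab)).tail
        ((hEout b a (fun hh => h ⟨hh.2, hh.1⟩)).mp hba))
  have hstat : ∀ a b, Ec a b → G.dir a b ∨ G.undir a b := by
    intro a b h
    rcases (hskel a b).mp (Or.inl h) with hd | hd | hu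
    · exact Or.inl hd
    · exact absurd (hdirp b a hd) (hanti a b h)
    · exact Or.inr hu
  have hside : ∀ a b, G.undir a b → (a ∈ V1 ↔ b ∈ V1) := fun a b h => bcomp_mem_iff h1 h
  -- acyclicity via cycle induction
  have key : ∀ n, ∀ c : ℕ → V, 0 < n → (∀ i, c (i + n) = c i) →
      (∀ i, Ec (c i) (c (i + 1))) → False := by
    intro n
    induction n using Nat.strong_induction_on with
    | _ n IH =>
    intro c hn hper hedge
    have hperm : ∀ t i, c (i + n * t) = c i := by
      intro t
      induction t with
      | zero => simp
      | succ k ihk =>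
        intro i
        have : i + n * (k + 1) = (i + n * k) + n := by ring
        rw [this, hper, ihk i]
    rcases Nat.lt_or_ge n 3 with h3 | h3
    · interval_cases n
      · have h0 := hedge 0
        have hc : c 1 = c 0 := by simpa using hper 0
        rw [hc] at h0
        exact hanti _ _ h0 h0
      · have h0 := hedge 0
        have h1' := hedge 1
        have hc : c 2 = c 0 := by simpa using hper 0
        rw [hc] at h1'
        exact hanti _ _ h0 h1'
    · have hc0 : c n = c 0 := by simpa using hper 0
      by_cases hA : ∀ i, G.dir (c i) (c (i+1))
      · have hE1e : ∀ i, E1 (c i) (c (i+1)) := fun i => hE1.2.2.1 _ _ (hA i)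
        have := chain_transGen E1 c hE1e n hn
        rw [hc0] at this
        exact hE1.1 (c 0) this
      · by_cases hB : ∀ i, G.undir (c i) (c (i+1))
        · have hmem : ∀ i, (c i ∈ V1 ↔ c 0 ∈ V1) := by
            intro i
            induction i with
            | zero => exact Iff.rfl
            | succ k ihk => rw [← ihk]; exact (hside _ _ (hB k)).symm
          by_cases h0 : c 0 ∈ V1
          · have hEe : ∀ i, E' (c i) (c (i+1)) :=
              fun i => (hEin _ _ ((hmem i).mpr h0) ((hmem (i+1)).mpr h0)).mp (hedge i)
            have := chain_transGen E' c hEe n hn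
            rw [hc0] at this
            exact hE'.1 (c 0) this
          · have hEe : ∀ i, E1 (c i) (c (i+1)) :=
              fun i => (hEout _ _ (fun hh => h0 ((hmem i).mp hh.1))).mp (hedge i)
            have := chain_transGen E1 c hEe n hn
            rw [hc0] at this
            exact hE1.1 (c 0) this
        · obtain ⟨j0, hj0⟩ := not_forall.mp hA
          obtain ⟨i, hi⟩ := not_forall.mp hB
          have hju : G.undir (c j0) (c (j0+1)) := (hstat _ _ (hedge j0)).resolve_left hj0
          have hid : G.dir (c i) (c (i+1)) := (hstat _ _ (hedge i)).resolve_right hi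
          have hex : ∃ m, G.undir (c (i+1+m)) (c (i+1+m+1)) := by
            refine ⟨j0 + n * (i+1) - (i+1), ?_⟩
            have hge : i + 1 ≤ n * (i+1) := Nat.le_mul_of_pos_left _ hn
            have heq : i + 1 + (j0 + n * (i+1) - (i+1)) = j0 + n * (i+1) := by omega
            rw [heq]
            have e2 : j0 + n * (i+1) + 1 = (j0 + 1) + n * (i+1) := by ring
            rw [e2, hperm (i+1) j0, hperm (i+1) (j0+1)]
            exact hju
          have hm0 : ∃ m, G.undir (c (i+1+m)) (c (i+1+m+1)) := hex
          set m0 := Nat.find hm0 with hm0def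
          have hundir : G.undir (c (i+1+m0)) (c (i+1+m0+1)) := Nat.find_spec hm0
          have hdir0 : G.dir (c (i + m0)) (c (i + m0 + 1)) := by
            rcases Nat.eq_zero_or_pos m0 with hz | hz
            · rw [hz]; simpa using hid
            · obtain ⟨m', hm'⟩ : ∃ m', m0 = m' + 1 := ⟨m0 - 1, by omega⟩
              have hnu : ¬ G.undir (c (i+1+m')) (c (i+1+m'+1)) :=
                Nat.find_min hm0 (by omega)
              have e1 : i + m0 = i + 1 + m' := by omega
              rw [e1]
              exact (hstat _ _ (hedge (i+1+m'))).resolve_right hnu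
          set k := i + m0 with hk
          have hdiruv : G.dir (c k) (c (k+1)) := hdir0
          have hundirvw : G.undir (c (k+1)) (c (k+2)) := by
            have e2 : i + 1 + m0 + 1 = k + 2 := by omega
            have e1 : i + 1 + m0 = k + 1 := by omega
            rwa [e2, e1] at hundir
          have hEuv : Ec (c k) (c (k+1)) := hedge k
          have hEvw : Ec (c (k+1)) (c (k+2)) := hedge (k+1)
          have hneuw : c k ≠ c (k+2) := by
            intro h
            rw [h] at hEuv
            exact hanti _ _ hEvw hEuv
          have hadjuw : G.adj (c k) (c (k+2)) := meek1 hG hdiruv hundirvw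
          rcases (hskel (c k) (c (k+2))).mpr hadjuw with hEuw | hEwu
          · -- shortcut: reduce cycle length by one
            set q := n - 1 with hq
            have hq2 : 2 ≤ q := by omega
            set d : ℕ → V := fun i' => if i' % q = 0 then c k else c (k + i' % q + 1) with hd
            have hdper : ∀ i', d (i' + q) = d i' := by
              intro i'
              simp only [hd, Nat.add_mod_right]
            have hdedge : ∀ i', Ec (d i') (d (i'+1)) := by
              intro i'
              have hrlt : i' % q < q := Nat.mod_lt _ (by omega)
              have h1mod : 1 % q = 1 := Nat.mod_eq_of_lt (by omega)
              by_cases hr0 : i' % q = 0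
              · have hmod : (i' + 1) % q = 1 := by
                  rw [Nat.add_mod, hr0, h1mod]
                  exact Nat.mod_eq_of_lt (by omega)
                simp only [hd, hr0, hmod, if_pos rfl, if_neg (by omega : (1:ℕ) ≠ 0)]
                have e1 : k + 1 + 1 = k + 2 := by omega
                rw [e1]
                exact hEuw
              · by_cases hrtop : i' % q = q - 1
                · have hmod : (i' + 1) % q = 0 := by
                    rw [Nat.add_mod, hrtop, h1mod]
                    have : q - 1 + 1 = q := by omega
                    rw [this, Nat.mod_self]
                  simp only [hd, hmod, if_pos rfl, if_neg hr0]
                  rw [hrtop]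
                  have e1 : k + (q - 1) + 1 = k + q := by omega
                  rw [e1]
                  have e2 : c (k + q + 1) = c k := by
                    rw [show k + q + 1 = k + n from by omega]
                    exact hper k
                  have := hedge (k + q)
                  rwa [e2] at this
                · have hmod : (i' + 1) % q = i' % q + 1 := by
                    rw [Nat.add_mod, h1mod]
                    exact Nat.mod_eq_of_lt (by omega)
                  simp only [hd, hmod, if_neg hr0, if_neg (by omega : ¬ i' % q + 1 = 0)]
                  have e1 : k + (i' % q + 1) + 1 = (k + i' % q + 1) + 1 := by ring
                  rw [e1]
                  exact hedge (k + i' % q + 1)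
            exact IH q (by omega) d (by omega) hdper hdedge
          · -- triangle case
            rcases hstat _ _ hEwu with hdwu | huwu
            · exact ddu hG hdiruv hdwu hundirvw
            · by_cases hv : c (k+1) ∈ V1
              · have hw : c (k+2) ∈ V1 := (hside _ _ hundirvw).mp hv
                have hu : c k ∈ V1 := (hside _ _ huwu).mp hw
                exact hE'.1 (c k) (((Relation.TransGen.single ((hEin _ _ hu hv).mp hEuv)).tail
                  ((hEin _ _ hv hw).mp hEvw)).tail ((hEin _ _ hw hu).mp hEwu))
              · have hw : c (k+2) ∉ V1 := fun h => hv ((hside _ _ hundirvw).mpr h)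
                exact hE1.1 (c k) (((Relation.TransGen.single
                  ((hEout _ _ (fun h => hv h.2)).mp hEuv)).tail
                  ((hEout _ _ (fun h => hv h.1)).mp hEvw)).tail
                  ((hEout _ _ (fun h => hw h.1)).mp hEwu))
  have hacy : Acyclic Ec := by
    intro x hx
    obtain ⟨nn, f, hnn, hf0, hfn, hf⟩ := transGen_to_fn hx
    refine key nn (fun i => f (i % nn)) hnn (fun i => by simp [Nat.add_mod_right]) ?_
    intro i
    show Ec (f (i % nn)) (f ((i + 1) % nn))
    have hr : i % nn < nn := Nat.mod_lt _ hnn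
    by_cases htop : i % nn + 1 = nn
    · have hmod : (i + 1) % nn = 0 := by
        rw [Nat.add_mod]
        have h1 : 1 % nn = 1 % nn := rfl
        rcases Nat.eq_or_lt_of_le (show 1 ≤ nn from hnn) with h | h
        · subst h; omega
        · rw [Nat.mod_eq_of_lt h, htop, Nat.mod_self]
      rw [hmod]
      have := hf (i % nn) hr
      rw [htop, hfn, ← hf0] at this
      exact this
    · have hmod : (i + 1) % nn = i % nn + 1 := by
        rw [Nat.add_mod, Nat.mod_eq_of_lt (show 1 < nn by omega),
          Nat.mod_eq_of_lt (by omega)]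
      rw [hmod]
      exact hf (i % nn) hr
  -- v-structures
  have hvee : ∀ a b c, Ec a b → Ec c b → a ≠ c → ¬ G.adj a c →
      ¬ (a ∈ V1 ∧ b ∈ V1 ∧ c ∈ V1) → G.dir a b := by
    intro a b c hab hcb hne hnadj hnall
    rcases hstat _ _ hab with hd | hu
    · exact hd
    exfalso
    have hiff := hside _ _ hu
    by_cases ha : a ∈ V1
    · have hb : b ∈ V1 := hiff.mp ha
      have hc : c ∉ V1 := fun h => hnall ⟨ha, hb, h⟩
      have hdcb : G.dir c b := by
        rcases hstat _ _ hcb with h | h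
        · exact h
        · exact absurd ((hside _ _ h).mpr hb) hc
      exact undir_no_forced_vee hG hu hdcb hne hnadj
    · have hb : b ∉ V1 := fun h => ha (hiff.mpr h)
      have hE1ab : E1 a b := (hEout a b (fun h => ha h.1)).mp hab
      have hE1cb : E1 c b := (hEout c b (fun h => hb h.2)).mp hcb
      have hvst : vStructD E1 a b c :=
        ⟨hE1ab, hE1cb, hne, fun h => hnadj ((hE1.2.1 a c).mp h)⟩
      exact G.disj a b hu ((hE1.2.2.2 a b c).mp hvst).1
  refine ⟨hacy, hskel, hdirp, ?_⟩
  intro a b c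
  constructor
  · rintro ⟨hab, hcb, hne, hnadj⟩
    have hnadjG : ¬ G.adj a c := fun h => by
      rcases (hskel a c).mpr h with h' | h'
      · exact hnadj (Or.inl h')
      · exact hnadj (Or.inr h')
    by_cases hall : a ∈ V1 ∧ b ∈ V1 ∧ c ∈ V1
    · obtain ⟨ha, hb, hc⟩ := hall
      have h1' : E' a b := (hEin _ _ ha hb).mp hab
      have h2' : E' c b := (hEin _ _ hc hb).mp hcb
      have hnadj' : ¬ adjD E' a c := fun h =>
        hnadjG (((induce_adj G V1 a c).mp ((hE'.2.1 a c).mp h)).2.2)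
      obtain ⟨hv1, hv2, _, _⟩ := (hE'.2.2.2 a b c).mp ⟨h1', h2', hne, hnadj'⟩
      exact ⟨hv1.2.2, hv2.2.2, hne, hnadjG⟩
    · refine ⟨hvee a b c hab hcb hne hnadjG hall, ?_, hne, hnadjG⟩
      exact hvee c b a hcb hab (Ne.symm hne) (fun h => hnadjG (adj_symm G h))
        (fun h => hall ⟨h.2.2, h.2.1, h.1⟩)
  · rintro ⟨hd1, hd2, hne, hnadj⟩
    refine ⟨hdirp _ _ hd1, hdirp _ _ hd2, hne, ?_⟩
    rintro (h | h)
    · exact hnadj ((hskel a c).mp (Or.inl h))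
    · exact hnadj ((hskel a c).mp (Or.inr h))

end Helpers

/-- replacing the induced subgraph of an MPDAG `G*₁` over the vertex set
`V₁` of a B-component containing `X − Y` by the MPDAG `B₂₁` of `[B₁₁]` restricted by
`X → Y` yields exactly the MPDAG representing the DAGs of `[G*₁]` satisfying `X → Y`. -/
theorem stmt16 {V : Type*} (G1 B21 G2 : PDAG V) (hG1 : G1.IsMPDAG)
    (V1 : Set V) (h1 : IsBComponent G1 V1)
    (X Y : V) (hX : X ∈ V1) (hY : Y ∈ V1) (hXY : G1.undir X Y)
    (hB21m : B21.IsMPDAG)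
    (hB21 : ∀ E, B21.Represents E ↔ ((G1.induce V1).Represents E ∧ E X Y))
    (hin : ∀ a b, a ∈ V1 → b ∈ V1 →
      ((G2.dir a b ↔ B21.dir a b) ∧ (G2.undir a b ↔ B21.undir a b)))
    (hout : ∀ a b, ¬ (a ∈ V1 ∧ b ∈ V1) →
      ((G2.dir a b ↔ G1.dir a b) ∧ (G2.undir a b ↔ G1.undir a b))) :
    G2.IsMPDAG ∧ ∀ E, G2.Represents E ↔ (G1.Represents E ∧ E X Y) := by
  classical
  obtain ⟨E0, hE0⟩ := hB21m.1
  obtain ⟨hE0I, hE0XY⟩ := (hB21 E0).mp hE0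
  have hB21adj : ∀ a b, B21.adj a b ↔ (G1.induce V1).adj a b :=
    fun a b => (hE0.2.1 a b).symm.trans (hE0I.2.1 a b)
  have hB21vs : ∀ a b c, B21.vStruct a b c ↔ (G1.induce V1).vStruct a b c :=
    fun a b c => (hE0.2.2.2 a b c).symm.trans (hE0I.2.2.2 a b c)
  have hF7 : ∀ a b, a ∈ V1 → b ∈ V1 → G1.dir a b → B21.dir a b := by
    intro a b ha hb hd
    refine (hB21m.2.1 a b).mpr ⟨?_, ?_⟩
    · exact (hB21adj a b).mpr ((induce_adj _ _ _ _).mpr ⟨ha, hb, Or.inl hd⟩)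
    · intro E hE
      exact ((hB21 E).mp hE).1.2.2.1 a b ⟨ha, hb, hd⟩
  have hF8 : ∀ a b, B21.dir a b → ∀ E, G1.Represents E → E X Y → E a b := by
    intro a b hd E hE hXYE
    have h2 : B21.Represents (fun u v => u ∈ V1 ∧ v ∈ V1 ∧ E u v) :=
      (hB21 _).mpr ⟨restr_represents hE V1, ⟨hX, hY, hXYE⟩⟩
    exact ((((hB21m.2.1 a b).mp hd).2) _ h2).2.2
  have hF9 : ∀ a b, G2.adj a b ↔ G1.adj a b := by
    intro a b
    by_cases h : a ∈ V1 ∧ b ∈ V1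
    · have ha := hin a b h.1 h.2
      have hb := hin b a h.2 h.1
      have h3 : B21.adj a b ↔ G1.adj a b := by
        rw [hB21adj, induce_adj]
        exact ⟨fun hh => hh.2.2, fun hh => ⟨h.1, h.2, hh⟩⟩
      rw [adj_unfold G2, ha.1, hb.1, ha.2, ← adj_unfold B21, h3]
    · have ha := hout a b h
      have hb := hout b a (fun hh => h ⟨hh.2, hh.1⟩)
      rw [adj_unfold G2, ha.1, hb.1, ha.2, ← adj_unfold G1]
  have hF10 : ∀ a b, G1.dir a b → G2.dir a b := by
    intro a b hd
    by_cases h : a ∈ V1 ∧ b ∈ V1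
    · exact (hin a b h.1 h.2).1.mpr (hF7 a b h.1 h.2 hd)
    · exact (hout a b h).1.mpr hd
  have hF11 : ∀ a b, G2.dir a b → ∀ E, G1.Represents E → E X Y → E a b := by
    intro a b hd E hE hXYE
    by_cases h : a ∈ V1 ∧ b ∈ V1
    · exact hF8 a b ((hin a b h.1 h.2).1.mp hd) E hE hXYE
    · exact hE.2.2.1 a b ((hout a b h).1.mp hd)
  have hF12 : G2.dir X Y := by
    apply (hin X Y hX hY).1.mpr
    refine (hB21m.2.1 X Y).mpr ⟨?_, fun E hE => ((hB21 E).mp hE).2⟩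
    exact (hB21adj X Y).mpr ((induce_adj _ _ _ _).mpr ⟨hX, hY, Or.inr (Or.inr hXY)⟩)
  have hL : ∀ a b c, G2.dir a b → G2.dir c b → a ≠ c → ¬ G1.adj a c → G1.dir a b := by
    intro a b c hab hcb hne hnadj
    by_cases h : a ∈ V1 ∧ b ∈ V1
    · obtain ⟨ha, hb⟩ := h
      have hBab : B21.dir a b := (hin a b ha hb).1.mp hab
      by_cases hd : G1.dir a b
      · exact hd
      exfalso
      have hadj : G1.adj a b :=
        ((induce_adj G1 V1 a b).mp ((hB21adj a b).mp (Or.inl hBab))).2.2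
      have hund : G1.undir a b := by
        rcases hadj with h' | h' | h'
        · exact absurd h' hd
        · exact absurd hBab (B21.dir_asymm b a (hF7 b a hb ha h'))
        · exact h'
      have hdcb : G1.dir c b := by
        by_cases hc : c ∈ V1 ∧ b ∈ V1
        · have hBcb : B21.dir c b := (hin c b hc.1 hc.2).1.mp hcb
          by_cases hd' : G1.dir c b
          · exact hd'
          exfalso
          have hadj' : G1.adj c b :=
            ((induce_adj G1 V1 c b).mp ((hB21adj c b).mp (Or.inl hBcb))).2.2
          have hund' : G1.undir c b := by
            rcases hadj' with h' | h' | h'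
            · exact absurd h' hd'
            · exact absurd hBcb (B21.dir_asymm b c (hF7 b c hb hc.1 h'))
            · exact h'
          have hBv : B21.vStruct a b c := ⟨hBab, hBcb, hne, fun hh =>
            hnadj (((induce_adj G1 V1 a c).mp ((hB21adj a c).mp hh)).2.2)⟩
          exact hd (((hB21vs a b c).mp hBv).1.2.2)
        · exact (hout c b hc).1.mp hcb
      exact undir_no_forced_vee hG1 hund hdcb hne hnadj
    · exact (hout a b h).1.mp hab
  have main : ∀ E, G2.Represents E ↔ (G1.Represents E ∧ E X Y) := by
    intro E
    constructor
    · intro hE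
      have hxy : E X Y := hE.2.2.1 X Y hF12
      refine ⟨⟨hE.1, ?_, ?_, ?_⟩, hxy⟩
      · intro a b; rw [hE.2.1, hF9]
      · intro a b hd; exact hE.2.2.1 a b (hF10 a b hd)
      · intro a b c
        constructor
        · intro hv
          obtain ⟨hd1, hd2, hne, hnadj⟩ := (hE.2.2.2 a b c).mp hv
          have hnadj1 : ¬ G1.adj a c := fun h => hnadj ((hF9 a c).mpr h)
          exact ⟨hL a b c hd1 hd2 hne hnadj1,
            hL c b a hd2 hd1 (Ne.symm hne) (fun h => hnadj1 (adj_symm G1 h)),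
            hne, hnadj1⟩
        · rintro ⟨hd1, hd2, hne, hnadj⟩
          refine ⟨hE.2.2.1 _ _ (hF10 _ _ hd1), hE.2.2.1 _ _ (hF10 _ _ hd2), hne, ?_⟩
          intro h
          exact hnadj ((hF9 a c).mp ((hE.2.1 a c).mp h))
    · rintro ⟨hE, hxy⟩
      refine ⟨hE.1, ?_, ?_, ?_⟩
      · intro a b; rw [hE.2.1, ← hF9]
      · intro a b hd; exact hF11 a b hd E hE hxy
      · intro a b c
        constructor
        · intro hv
          obtain ⟨hd1, hd2, hne, hnadj⟩ := (hE.2.2.2 a b c).mp hv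
          exact ⟨hF10 _ _ hd1, hF10 _ _ hd2, hne, fun h => hnadj ((hF9 a c).mp h)⟩
        · rintro ⟨hd1, hd2, hne, hnadj⟩
          refine ⟨hF11 a b hd1 E hE hxy, hF11 c b hd2 E hE hxy, hne, ?_⟩
          intro h
          exact hnadj ((hF9 a c).mpr ((hE.2.1 a c).mp h))
  obtain ⟨Ew, hEw, hEwXY⟩ := hG1.2.2 X Y hXY
  have hex : ∃ E, G2.Represents E := ⟨Ew, (main Ew).mpr ⟨hEw, hEwXY⟩⟩
  have hundirG2 : ∀ a b, G2.undir a b → ∃ E, G2.Represents E ∧ E a b := by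
    intro a b hu
    by_cases h : a ∈ V1 ∧ b ∈ V1
    · have hB : B21.undir a b := (hin a b h.1 h.2).2.mp hu
      obtain ⟨E', hE', hE'ab⟩ := hB21m.2.2 a b hB
      obtain ⟨hE'I, hE'XY⟩ := (hB21 E').mp hE'
      obtain ⟨E1, hE1⟩ := hG1.1
      exact ⟨comb V1 E' E1,
        (main _).mpr ⟨comb_represents hG1 h1 hE'I hE1, Or.inl ⟨hX, hY, hE'XY⟩⟩,
        Or.inl ⟨h.1, h.2, hE'ab⟩⟩
    · have hu1 : G1.undir a b := (hout a b h).2.mp hu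
      have hna : a ∉ V1 := fun ha => h ⟨ha, (bcomp_mem_iff h1 hu1).mp ha⟩
      obtain ⟨E1, hE1, hE1ab⟩ := hG1.2.2 a b hu1
      exact ⟨comb V1 E0 E1,
        (main _).mpr ⟨comb_represents hG1 h1 hE0I hE1, Or.inl ⟨hX, hY, hE0XY⟩⟩,
        Or.inr ⟨fun hh => hna hh.1, hE1ab⟩⟩
  refine ⟨⟨hex, ?_, hundirG2⟩, main⟩
  intro a b
  constructor
  · intro hd
    exact ⟨Or.inl hd, fun E hE => hE.2.2.1 a b hd⟩
  · rintro ⟨hadj, hall⟩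
    rcases hadj with hd | hd | hu
    · exact hd
    · exfalso
      obtain ⟨E, hE⟩ := hex
      exact hE.1 a ((Relation.TransGen.single (hall E hE)).tail (hE.2.2.1 b a hd))
    · exfalso
      obtain ⟨E, hE, hba⟩ := hundirG2 b a (G2.undir_symm a b hu)
      exact hE.1 a ((Relation.TransGen.single (hall E hE)).tail hba)
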